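/- Let R be a *-ring, p, q projectors with p - q Moore-Penrose invertible, and G = (p-q)†p. Then G² = G and G = (1-q)(p-q)†. -/
import Mathlib


/-- `b` is a Moore-Penrose inverse of `a`. -/
def IsMP {R : Type*} [Ring R] [StarRing R] (a b : R) : Prop :=
  a * b * a = a ∧ b * a * b = b ∧ star (a * b) = a * b ∧ star (b * a) = b * a

/-- `p` is a projector: `p² = p = p*`. -/
def IsProjector {R : Type*} [Ring R] [StarRing R] (p : R) : Prop :=
  p * p = p ∧ star p = p

/-- `a` is *-cancellable. -/
def StarCancellable {R : Type*} [Ring R] [StarRing R] (a : R) : Prop :=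
  (∀ x : R, star a * a * x = 0 → a * x = 0) ∧ (∀ x : R, x * (a * star a) = 0 → x * a = 0)

lemma isMP_star {R : Type*} [Ring R] [StarRing R] {a b : R} (h : IsMP a b) :
    IsMP (star a) (star b) := by
  obtain ⟨h1, h2, h3, h4⟩ := h
  refine ⟨?_, ?_, ?_, ?_⟩
  · calc star a * star b * star a = star (a * (b * a)) := by rw [star_mul, star_mul]
    _ = star a := by rw [← mul_assoc, h1]
  · calc star b * star a * star b = star (b * (a * b)) := by rw [star_mul, star_mul]
    _ = star b := by rw [← mul_assoc, h2]
  · rw [← star_mul, h4]; exact h4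
  · rw [← star_mul, h3]; exact h3

lemma mp_unique {R : Type*} [Ring R] [StarRing R] {a b c : R}
    (hb : IsMP a b) (hc : IsMP a c) : b = c := by
  obtain ⟨hb1, hb2, hb3, hb4⟩ := hb
  obtain ⟨hc1, hc2, hc3, hc4⟩ := hc
  have hab : a * b = a * c := by
    calc a * b = (a * c * a) * b := by rw [hc1]
    _ = (a * c) * (a * b) := by rw [mul_assoc]
    _ = star (a * c) * star (a * b) := by rw [hc3, hb3]
    _ = star ((a * b) * (a * c)) := (star_mul _ _).symm
    _ = star ((a * b * a) * c) := by rw [mul_assoc (a * b) a c]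
    _ = star (a * c) := by rw [hb1]
    _ = a * c := hc3
  have hba : b * a = c * a := by
    calc b * a = b * (a * c * a) := by rw [hc1]
    _ = (b * a) * (c * a) := by noncomm_ring
    _ = star (b * a) * star (c * a) := by rw [hb4, hc4]
    _ = star ((c * a) * (b * a)) := (star_mul _ _).symm
    _ = star (c * (a * b * a)) := by rw [show (c * a) * (b * a) = c * (a * b * a) from by noncomm_ring]
    _ = star (c * a) := by rw [hb1]
    _ = c * a := hc4
  calc b = b * a * b := hb2.symm
  _ = b * (a * b) := by rw [mul_assoc]
  _ = b * (a * c) := by rw [hab]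
  _ = (b * a) * c := by rw [← mul_assoc]
  _ = (c * a) * c := by rw [hba]
  _ = c := hc2

theorem stmt9 {R : Type*} [Ring R] [StarRing R] (p q d : R)
    (hp : IsProjector p) (hq : IsProjector q)
    (hd : IsMP (p - q) d) :
    (d * p) * (d * p) = d * p ∧ d * p = (1 - q) * d := by
  obtain ⟨hp1, hp2⟩ := hp
  obtain ⟨hq1, hq2⟩ := hq
  have hsa : star (p - q) = p - q := by rw [star_sub, hp2, hq2]
  have hds : star d = d := by
    have h' := isMP_star hd
    rw [hsa] at h'
    exact (mp_unique hd h').symm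
  obtain ⟨h1, h2, h3, h4⟩ := hd
  have hcomm : d * (p - q) = (p - q) * d := by
    calc d * (p - q) = star d * star (p - q) := by rw [hds, hsa]
    _ = star ((p - q) * d) := (star_mul _ _).symm
    _ = (p - q) * d := h3
  obtain ⟨f, hf⟩ : ∃ f : R, f = 1 - (p - q) * d := ⟨_, rfl⟩
  have hfmul : ∀ y : R, f * y = y - (p - q) * d * y := by
    intro y; rw [hf, sub_mul, one_mul]
  have hpf : p * f = q * f := by
    have h0 : (p - q) * f = 0 := by
      rw [hf, mul_sub, mul_one, ← hcomm, ← mul_assoc, h1, sub_self]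
    rw [sub_mul] at h0
    exact sub_eq_zero.mp h0
  have hax : (p - q) * (p * f) = 0 := by
    rw [sub_mul, ← mul_assoc, hp1, hpf, ← mul_assoc, hq1, sub_self]
  have hEx : (p - q) * d * (p * f) = 0 := by
    rw [← hcomm, mul_assoc, hax, mul_zero]
  have hffix : f * (p * f) = p * f := by
    rw [hfmul, hEx, sub_zero]
  have hdf : d * f = 0 := by
    rw [hf, mul_sub, mul_one, ← mul_assoc, h2, sub_self]
  have hdx : d * (p * f) = 0 := by
    rw [← hffix, ← mul_assoc, hdf, zero_mul]
  have hdpE : d * p * ((p - q) * d) = d * p := by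
    have h' := hdx
    rw [hf, mul_sub, mul_one, mul_sub] at h'
    rw [mul_assoc]
    exact (sub_eq_zero.mp h').symm
  have hEpd : (p - q) * d * (p * d) = p * d := by
    have h9 := congrArg star hdpE
    simp only [star_mul, hds, hsa, hp2] at h9
    rw [hcomm] at h9
    exact h9
  have hpa : p * (p - q) + (p - q) * p = (p - q) + (p - q) * (p - q) := by
    simp only [mul_sub, sub_mul, hp1, hq1]; abel
  have e1 : d * (p * (p - q)) * d = d * p := by
    rw [← mul_assoc d p (p - q), mul_assoc (d * p) (p - q) d]
    exact hdpE
  have e2 : d * ((p - q) * p) * d = p * d := by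
    rw [← mul_assoc d (p - q) p, hcomm, mul_assoc ((p - q) * d) p d]
    exact hEpd
  have e4 : d * ((p - q) * (p - q)) * d = (p - q) * d := by
    rw [← mul_assoc d (p - q) (p - q), hcomm, h1]
  have hkey : d * p + p * d = d + (p - q) * d := by
    have h10 := congrArg (fun x => d * x * d) hpa
    simp only [mul_add, add_mul] at h10
    rw [e1, e2, h2, e4] at h10
    exact h10
  have hpd : p * d = d - d * q := by
    have h11 : p * d = d + (p - q) * d - d * p := by rw [← hkey]; abel
    rw [h11, ← hcomm, mul_sub]; abel
  constructor
  · calc d * p * (d * p) = d * ((p * d) * p) := by rw [mul_assoc, ← mul_assoc p d p]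
    _ = d * ((d - d * q) * p) := by rw [hpd]
    _ = d * (d * ((p - q) * p)) := by simp only [sub_mul, mul_sub, hp1, mul_assoc]
    _ = d * ((d * (p - q)) * p) := by rw [← mul_assoc d (p - q) p]
    _ = d * (((p - q) * d) * p) := by rw [hcomm]
    _ = (d * ((p - q) * d)) * p := by rw [← mul_assoc]
    _ = d * p := by rw [← mul_assoc d (p - q) d, h2]
  · have h12 : d * p = d + (p - q) * d - p * d := by rw [← hkey]; abel
    rw [h12, sub_mul, sub_mul, one_mul]; abel
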